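/- Let G be an even-tempered well-tempered scoring game with gap_0(G) = 0 (i.e., every even-tempered subgame H satisfies L(H) ≥ R(H)). Then G ≳ 0 if and only if R(G) ≥ 0, where G ≳ 0 means L(G+X) ≥ L(X) and R(G+X) ≥ R(X) for all well-tempered games X. -/

import Mathlib

/-- Well-tempered scoring game trees: an integer (final score) or a position
with lists of Left and Right options. -/
inductive WT : Type where
  | int : ℤ → WT
  | node : List WT → List WT → WT

namespace WT

/-- Left options. -/
def lopts : WT → List WT
  | int _ => []
  | node L _ => L

/-- Right options. -/
def ropts : WT → List WT
  | int _ => []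
  | node _ R => R

theorem sizeOf_lt_of_mem_lopts : ∀ {G g : WT}, g ∈ G.lopts → sizeOf g < sizeOf G := by
  intro G g h
  cases G with
  | int n => simp [lopts] at h
  | node L R =>
    simp only [lopts] at h
    have h1 := List.sizeOf_lt_of_mem h
    have h2 : sizeOf (WT.node L R) = 1 + sizeOf L + sizeOf R := by simp
    omega

theorem sizeOf_lt_of_mem_ropts : ∀ {G g : WT}, g ∈ G.ropts → sizeOf g < sizeOf G := by
  intro G g h
  cases G with
  | int n => simp [ropts] at h
  | node L R =>
    simp only [ropts] at h
    have h1 := List.sizeOf_lt_of_mem h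
    have h2 : sizeOf (WT.node L R) = 1 + sizeOf L + sizeOf R := by simp
    omega

/-- Disjunctive sum of two games. -/
def add (G H : WT) : WT :=
  match G, H with
  | int m, int n => int (m + n)
  | G, H =>
    node ((G.lopts.attach.map fun g => add g.1 H) ++ (H.lopts.attach.map fun h => add G h.1))
         ((G.ropts.attach.map fun g => add g.1 H) ++ (H.ropts.attach.map fun h => add G h.1))
termination_by sizeOf G + sizeOf H
decreasing_by
  all_goals
    first
      | (have := sizeOf_lt_of_mem_lopts g.2; omega)
      | (have := sizeOf_lt_of_mem_lopts h.2; omega)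
      | (have := sizeOf_lt_of_mem_ropts g.2; omega)
      | (have := sizeOf_lt_of_mem_ropts h.2; omega)

/-- Negation of a game: swap players and negate scores. -/
def neg : WT → WT
  | int n => int (-n)
  | node L R =>
    node ((WT.node L R).ropts.attach.map fun g => neg g.1)
         ((WT.node L R).lopts.attach.map fun g => neg g.1)
termination_by G => sizeOf G
decreasing_by
  all_goals
    first
      | exact sizeOf_lt_of_mem_lopts g.2
      | exact sizeOf_lt_of_mem_ropts g.2

def lmax : List ℤ → ℤ
  | [] => 0
  | x :: xs => xs.foldl max x

def lmin : List ℤ → ℤ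
  | [] => 0
  | x :: xs => xs.foldl min x

/-- The pair (left outcome, right outcome). -/
def out : WT → ℤ × ℤ
  | int n => (n, n)
  | node L R =>
    (lmax ((WT.node L R).lopts.attach.map fun g => (out g.1).2),
     lmin ((WT.node L R).ropts.attach.map fun g => (out g.1).1))
termination_by G => sizeOf G
decreasing_by
  all_goals
    first
      | exact sizeOf_lt_of_mem_lopts g.2
      | exact sizeOf_lt_of_mem_ropts g.2

/-- Left outcome L(G): optimal score when Left moves first. -/
def Lout (G : WT) : ℤ := G.out.1

/-- Right outcome R(G): optimal score when Right moves first. -/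
def Rout (G : WT) : ℤ := G.out.2

/-- `IsWT G p` : `G` is a well-tempered game of parity `p`
(`false` = even-tempered, `true` = odd-tempered). -/
inductive IsWT : WT → Bool → Prop where
  | int (n : ℤ) : IsWT (WT.int n) false
  | node {L R : List WT} {p : Bool} (hL : L ≠ []) (hR : R ≠ [])
      (hLp : ∀ g ∈ L, IsWT g p) (hRp : ∀ g ∈ R, IsWT g p) :
      IsWT (WT.node L R) (!p)

/-- `G` is a well-tempered game (of some parity). -/
def Wt (G : WT) : Prop := ∃ p, IsWT G p

/-- Parity, computed structurally (`false` = even-tempered, `true` = odd-tempered;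
agrees with `IsWT` on well-tempered games). -/
def par : WT → Bool
  | int _ => false
  | node [] _ => true
  | node (g :: _) _ => !(par g)

/-- Final score under optimal play when Left moves last. -/
def Lf (G : WT) : ℤ := if G.par then G.Lout else G.Rout

/-- Final score under optimal play when Right moves last. -/
def Rf (G : WT) : ℤ := if G.par then G.Rout else G.Lout

/-- `G ≲ H` : for every well-tempered `X`, `L(G+X) ≤ L(H+X)` and `R(G+X) ≤ R(H+X)`. -/
def Le (G H : WT) : Prop :=
  ∀ X : WT, X.Wt → (G.add X).Lout ≤ (H.add X).Lout ∧ (G.add X).Rout ≤ (H.add X).Rout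

/-- `G ≳ H`. -/
def Ge (G H : WT) : Prop := Le H G

/-- `G ≈ H` : equivalence of scoring games. -/
def Equiv (G H : WT) : Prop :=
  ∀ X : WT, X.Wt → (G.add X).Lout = (H.add X).Lout ∧ (G.add X).Rout = (H.add X).Rout

/-- `G` and `H` are well-tempered with the same parity. -/
def SamePar (G H : WT) : Prop := ∃ p, IsWT G p ∧ IsWT H p

/-- `G` takes values in `S`: every integer subgame lies in `S`. -/
inductive Valued (S : Set ℤ) : WT → Prop where
  | int {n : ℤ} : n ∈ S → Valued S (WT.int n)
  | node {L R : List WT} : (∀ g ∈ L, Valued S g) → (∀ g ∈ R, Valued S g) →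
      Valued S (WT.node L R)

/-- `Subgame H G` : `H` is a subgame of `G`. -/
inductive Subgame : WT → WT → Prop where
  | refl (G : WT) : Subgame G G
  | left {H G' : WT} {L R : List WT} : G' ∈ L → Subgame H G' → Subgame H (WT.node L R)
  | right {H G' : WT} {L R : List WT} : G' ∈ R → Subgame H G' → Subgame H (WT.node L R)

/-- `gap G p` : supremum of `R(H) - L(H)` over subgames `H` of `G` of parity `p`
(as an element of `WithBot ℤ`; the supremum of the empty set is `⊥ = -∞`). -/
noncomputable def gap (G : WT) (p : Bool) : WithBot ℤ :=
  sSup {x : WithBot ℤ | ∃ H : WT, Subgame H G ∧ IsWT H p ∧ x = ((H.Rout - H.Lout : ℤ) : WithBot ℤ)}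

/-- Heating by `t`. -/
def heat (t : ℤ) : WT → WT
  | int n => int n
  | node L R =>
    node ((WT.node L R).lopts.attach.map fun g => (WT.int t).add (heat t g.1))
         ((WT.node L R).ropts.attach.map fun g => (WT.int (-t)).add (heat t g.1))
termination_by G => sizeOf G
decreasing_by
  all_goals
    first
      | exact sizeOf_lt_of_mem_lopts g.2
      | exact sizeOf_lt_of_mem_ropts g.2

end WT

namespace WT

lemma foldl_max_le {c : ℤ} : ∀ (xs : List ℤ) (b : ℤ), b ≤ c → (∀ a ∈ xs, a ≤ c) → xs.foldl max b ≤ c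
  | [], b, hb, _ => hb
  | y :: ys, b, hb, h => foldl_max_le ys (max b y) (max_le hb (h y (by simp)))
      (fun a ha => h a (by simp [ha]))

lemma le_foldl_max_self : ∀ (xs : List ℤ) (b : ℤ), b ≤ xs.foldl max b
  | [], b => le_refl b
  | y :: ys, b => le_trans (le_max_left b y) (le_foldl_max_self ys (max b y))

lemma le_foldl_max_of_mem : ∀ {xs : List ℤ} {a : ℤ}, a ∈ xs → ∀ b, a ≤ xs.foldl max b := by
  intro xs; induction xs with
  | nil => intro a h; simp at h
  | cons y ys ih =>
    intro a h b
    rcases List.mem_cons.1 h with h | h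
    · subst h; exact le_trans (le_max_right b a) (le_foldl_max_self ys _)
    · exact ih h _

lemma le_foldl_min {c : ℤ} : ∀ (xs : List ℤ) (b : ℤ), c ≤ b → (∀ a ∈ xs, c ≤ a) → c ≤ xs.foldl min b
  | [], b, hb, _ => hb
  | y :: ys, b, hb, h => le_foldl_min ys (min b y) (le_min hb (h y (by simp)))
      (fun a ha => h a (by simp [ha]))

lemma foldl_min_le_self : ∀ (xs : List ℤ) (b : ℤ), xs.foldl min b ≤ b
  | [], b => le_refl b
  | y :: ys, b => le_trans (foldl_min_le_self ys (min b y)) (min_le_left b y)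

lemma foldl_min_le_of_mem : ∀ {xs : List ℤ} {a : ℤ}, a ∈ xs → ∀ b, xs.foldl min b ≤ a := by
  intro xs; induction xs with
  | nil => intro a h; simp at h
  | cons y ys ih =>
    intro a h b
    rcases List.mem_cons.1 h with h | h
    · subst h; exact le_trans (foldl_min_le_self ys _) (min_le_right b a)
    · exact ih h _

lemma le_lmax {l : List ℤ} {a : ℤ} (h : a ∈ l) : a ≤ lmax l := by
  cases l with
  | nil => simp at h
  | cons x xs =>
    rcases List.mem_cons.1 h with h | h
    · subst h; exact le_foldl_max_self _ _
    · exact le_foldl_max_of_mem h _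

lemma lmax_le {l : List ℤ} {c : ℤ} (hl : l ≠ []) (h : ∀ a ∈ l, a ≤ c) : lmax l ≤ c := by
  cases l with
  | nil => exact absurd rfl hl
  | cons x xs => exact foldl_max_le xs x (h x (by simp)) (fun a ha => h a (by simp [ha]))

lemma lmin_le {l : List ℤ} {a : ℤ} (h : a ∈ l) : lmin l ≤ a := by
  cases l with
  | nil => simp at h
  | cons x xs =>
    rcases List.mem_cons.1 h with h | h
    · subst h; exact foldl_min_le_self _ _
    · exact foldl_min_le_of_mem h _

lemma le_lmin {l : List ℤ} {c : ℤ} (hl : l ≠ []) (h : ∀ a ∈ l, c ≤ a) : c ≤ lmin l := by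
  cases l with
  | nil => exact absurd rfl hl
  | cons x xs => exact le_foldl_min xs x (h x (by simp)) (fun a ha => h a (by simp [ha]))

lemma exists_le_of_le_lmax {l : List ℤ} {c : ℤ} (hl : l ≠ []) (h : c ≤ lmax l) :
    ∃ a ∈ l, c ≤ a := by
  by_contra hc
  push_neg at hc
  have h2 := lmax_le hl (fun a ha => show a ≤ c - 1 by have := hc a ha; omega)
  omega

lemma foldl_max_map_add (n : ℤ) : ∀ (xs : List ℤ) (b : ℤ),
    (xs.map (· + n)).foldl max (b + n) = xs.foldl max b + n
  | [], b => rfl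
  | y :: ys, b => by
    simp only [List.map_cons, List.foldl_cons]
    rw [show max (b + n) (y + n) = max b y + n from max_add_add_right b y n]
    exact foldl_max_map_add n ys (max b y)

lemma foldl_min_map_add (n : ℤ) : ∀ (xs : List ℤ) (b : ℤ),
    (xs.map (· + n)).foldl min (b + n) = xs.foldl min b + n
  | [], b => rfl
  | y :: ys, b => by
    simp only [List.map_cons, List.foldl_cons]
    rw [show min (b + n) (y + n) = min b y + n from min_add_add_right b y n]
    exact foldl_min_map_add n ys (min b y)

lemma lmax_map_add {l : List ℤ} (hl : l ≠ []) (n : ℤ) : lmax (l.map (· + n)) = lmax l + n := by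
  cases l with
  | nil => exact absurd rfl hl
  | cons x xs => exact foldl_max_map_add n xs x

lemma lmin_map_add {l : List ℤ} (hl : l ≠ []) (n : ℤ) : lmin (l.map (· + n)) = lmin l + n := by
  cases l with
  | nil => exact absurd rfl hl
  | cons x xs => exact foldl_min_map_add n xs x

end WT
namespace WT

lemma out_int (n : ℤ) : out (int n) = (n, n) := by rw [out]

lemma Lout_int (n : ℤ) : Lout (int n) = n := by simp [Lout, out_int]
lemma Rout_int (n : ℤ) : Rout (int n) = n := by simp [Rout, out_int]

lemma Lout_node (L R : List WT) : Lout (node L R) = lmax (L.map Rout) := by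
  rw [Lout, out]
  simp only [lopts]
  rw [List.attach_map_val (l := L) (f := fun g => g.out.2)]
  rfl

lemma Rout_node (L R : List WT) : Rout (node L R) = lmin (R.map Lout) := by
  rw [Rout, out]
  simp only [ropts]
  rw [List.attach_map_val (l := R) (f := fun g => g.out.1)]
  rfl

lemma add_int_int (m n : ℤ) : (int m).add (int n) = int (m + n) := by rw [add]

lemma add_node_left (L R : List WT) (H : WT) :
    (node L R).add H = node ((L.map (fun g => g.add H)) ++ (H.lopts.map (fun h => (node L R).add h)))
      ((R.map (fun g => g.add H)) ++ (H.ropts.map (fun h => (node L R).add h))) := by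
  rw [add]
  · simp [lopts, ropts, List.attach_map_val]
  · simp

lemma add_node_right (G : WT) (L R : List WT) :
    G.add (node L R) = node ((G.lopts.map (fun g => g.add (node L R))) ++ (L.map (fun h => G.add h)))
      ((G.ropts.map (fun g => g.add (node L R))) ++ (R.map (fun h => G.add h))) := by
  cases G with
  | int n =>
    rw [add]
    · simp [lopts, ropts, List.attach_map_val]
    · simp
  | node a b =>
    rw [add]
    · simp [lopts, ropts, List.attach_map_val]
    · simp

lemma add_int_left (m : ℤ) (L R : List WT) :
    (int m).add (node L R) = node (L.map (fun h => (int m).add h)) (R.map (fun h => (int m).add h)) := by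
  rw [add_node_right]; simp [lopts, ropts]

lemma add_int_right (L R : List WT) (n : ℤ) :
    (node L R).add (int n) = node (L.map (fun g => g.add (int n))) (R.map (fun g => g.add (int n))) := by
  rw [add_node_left]; simp [lopts, ropts]

lemma ne_nil_of_isWT_node {L R : List WT} {p : Bool} (h : IsWT (node L R) p) :
    L ≠ [] ∧ R ≠ [] := by cases h with | node hL hR _ _ => exact ⟨hL, hR⟩

lemma out_add_int : ∀ {G : WT} {p : Bool}, IsWT G p → ∀ n : ℤ,
    Lout (G.add (int n)) = Lout G + n ∧ Rout (G.add (int n)) = Rout G + n := by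
  intro G p h
  induction h with
  | int m => intro n; rw [add_int_int]; simp [Lout_int, Rout_int]
  | @node L R q hL hR hLp hRp ihL ihR =>
    intro n
    rw [add_int_right, Lout_node, Rout_node, Lout_node, Rout_node]
    have hLn : L.map Rout ≠ [] := by simpa using hL
    have hRn : R.map Lout ≠ [] := by simpa using hR
    constructor
    · rw [List.map_map,
        List.map_congr_left (fun g hg => show (Rout ∘ fun g => g.add (int n)) g = ((· + n) ∘ Rout) g
          from (ihL g hg n).2),
        ← List.map_map]
      exact lmax_map_add hLn n
    · rw [List.map_map,
        List.map_congr_left (fun g hg => show (Lout ∘ fun g => g.add (int n)) g = ((· + n) ∘ Lout) g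
          from (ihR g hg n).1),
        ← List.map_map]
      exact lmin_map_add hRn n

end WT
namespace WT

lemma out_int_add : ∀ {X : WT} {p : Bool}, IsWT X p → ∀ m : ℤ,
    Lout ((int m).add X) = Lout X + m ∧ Rout ((int m).add X) = Rout X + m := by
  intro X p h
  induction h with
  | int n => intro m; rw [add_int_int]; simp [Lout_int, Rout_int]; omega
  | @node L R q hL hR hLp hRp ihL ihR =>
    intro m
    rw [add_int_left, Lout_node, Rout_node, Lout_node, Rout_node]
    have hLn : L.map Rout ≠ [] := by simpa using hL
    have hRn : R.map Lout ≠ [] := by simpa using hR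
    constructor
    · rw [List.map_map,
        List.map_congr_left (fun g hg => show (Rout ∘ fun g => (int m).add g) g = ((· + m) ∘ Rout) g
          from (ihL g hg m).2),
        ← List.map_map]
      exact lmax_map_add hLn m
    · rw [List.map_map,
        List.map_congr_left (fun g hg => show (Lout ∘ fun g => (int m).add g) g = ((· + m) ∘ Lout) g
          from (ihR g hg m).1),
        ← List.map_map]
      exact lmin_map_add hRn m

lemma Subgame.trans : ∀ {H G' G : WT}, Subgame H G' → Subgame G' G → Subgame H G := by
  intro H G' G h1 h2
  induction h2 with
  | refl => exact h1
  | left hm _ ih => exact Subgame.left hm ih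
  | right hm _ ih => exact Subgame.right hm ih

/-- List of all subgames. -/
def subs : WT → List WT
  | int n => [int n]
  | node L R => node L R ::
      ((L.attach.map fun g => subs g.1).flatten ++ (R.attach.map fun g => subs g.1).flatten)
termination_by G => sizeOf G
decreasing_by
  all_goals
    first
      | exact sizeOf_lt_of_mem_lopts g.2
      | exact sizeOf_lt_of_mem_ropts g.2

lemma mem_subs_self (G : WT) : G ∈ subs G := by
  cases G with
  | int n => rw [subs]; simp
  | node L R => rw [subs]; simp

lemma mem_subs_of_subgame : ∀ {H G : WT}, Subgame H G → H ∈ subs G := by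
  intro H G h
  induction h with
  | refl => exact mem_subs_self _
  | @left G' L R hm _ ih =>
    rw [subs]
    refine List.mem_cons_of_mem _ (List.mem_append_left _ ?_)
    rw [List.mem_flatten]
    exact ⟨subs G', List.mem_map.2 ⟨⟨G', hm⟩, List.mem_attach _ _, rfl⟩, ih⟩
  | @right G' L R hm _ ih =>
    rw [subs]
    refine List.mem_cons_of_mem _ (List.mem_append_right _ ?_)
    rw [List.mem_flatten]
    exact ⟨subs G', List.mem_map.2 ⟨⟨G', hm⟩, List.mem_attach _ _, rfl⟩, ih⟩

lemma gap_prop {G : WT} (hgap : G.gap false = ((0 : ℤ) : WithBot ℤ)) :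
    ∀ H : WT, Subgame H G → IsWT H false → H.Rout ≤ H.Lout := by
  intro H hs hw
  have hfin : {x : WithBot ℤ | ∃ H : WT, Subgame H G ∧ IsWT H false ∧
      x = ((H.Rout - H.Lout : ℤ) : WithBot ℤ)}.Finite := by
    apply Set.Finite.subset (Set.Finite.image
      (f := fun H : WT => ((H.Rout - H.Lout : ℤ) : WithBot ℤ)) (List.finite_toSet (subs G)))
    rintro x ⟨H, hs, _, rfl⟩
    exact ⟨H, mem_subs_of_subgame hs, rfl⟩
  have hmem : ((H.Rout - H.Lout : ℤ) : WithBot ℤ) ∈ {x : WithBot ℤ | ∃ H : WT, Subgame H G ∧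
      IsWT H false ∧ x = ((H.Rout - H.Lout : ℤ) : WithBot ℤ)} := ⟨H, hs, hw, rfl⟩
  have := le_csSup hfin.bddAbove hmem
  rw [← gap, hgap] at this
  have : (H.Rout - H.Lout : ℤ) ≤ (0 : ℤ) := by exact_mod_cast this
  omega

end WT
namespace WT

lemma isWT_node_inv : ∀ {g : WT} {p : Bool}, IsWT g p → ∀ {L R : List WT}, g = node L R →
    L ≠ [] ∧ R ≠ [] ∧ (∀ x ∈ L, IsWT x (!p)) ∧ (∀ x ∈ R, IsWT x (!p)) := by
  intro g p h
  cases h with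
  | int n => intro L R hLR; cases hLR
  | @node L' R' q hL hR hLp hRp =>
    intro L R hLR
    injection hLR with h1 h2
    subst h1; subst h2
    simpa [Bool.not_not] using ⟨hL, hR, hLp, hRp⟩

lemma isWT_true_node {g : WT} (h : IsWT g true) : ∃ L R, g = node L R ∧ L ≠ [] ∧ R ≠ [] ∧
    (∀ x ∈ L, IsWT x false) ∧ (∀ x ∈ R, IsWT x false) := by
  cases g with
  | int n => cases h  -- wrong parity
  | node L R =>
    obtain ⟨h1, h2, h3, h4⟩ := isWT_node_inv h rfl
    exact ⟨L, R, rfl, h1, h2, by simpa using h3, by simpa using h4⟩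

lemma isWT_false_cases {g : WT} (h : IsWT g false) :
    (∃ n, g = int n) ∨ ∃ L R, g = node L R ∧ L ≠ [] ∧ R ≠ [] ∧
      (∀ x ∈ L, IsWT x true) ∧ (∀ x ∈ R, IsWT x true) := by
  cases g with
  | int n => exact Or.inl ⟨n, rfl⟩
  | node L R =>
    obtain ⟨h1, h2, h3, h4⟩ := isWT_node_inv h rfl
    exact Or.inr ⟨L, R, rfl, h1, h2, by simpa using h3, by simpa using h4⟩

end WT
namespace WT

lemma ge_zero_main : ∀ (N : ℕ) (G X : WT), sizeOf G + sizeOf X ≤ N → IsWT G false →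
    (∀ H, Subgame H G → IsWT H false → H.Rout ≤ H.Lout) → 0 ≤ G.Rout →
    X.Wt → X.Lout ≤ (G.add X).Lout ∧ X.Rout ≤ (G.add X).Rout := by
  intro N
  induction N with
  | zero =>
    intro G X hsz _ _ _ _
    have : 0 < sizeOf G := by cases G <;> simp
    have : 0 < sizeOf X := by cases X <;> simp
    omega
  | succ N ih =>
    intro G X hsz hGwt hP hR0 hXwt
    obtain ⟨p, hX⟩ := hXwt
    cases hX with
    | int n =>
      have h := out_add_int hGwt n
      have hLR := hP G (Subgame.refl G) hGwt
      rw [Lout_int, Rout_int, h.1, h.2]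
      omega
    | @node LX RX q hLX hRX hLXp hRXp =>
      rcases isWT_false_cases hGwt with ⟨m, rfl⟩ | ⟨LG, RG, rfl, hLG, hRG, hLGp, hRGp⟩
      · -- G = int m
        have h := out_int_add (IsWT.node hLX hRX hLXp hRXp) m
        rw [h.1, h.2, Rout_int] at *
        omega
      · -- G = node LG RG, X = node LX RX
        set G := node LG RG with hGdef
        set X := node LX RX with hXdef
        have hXwt' : IsWT X (!q) := IsWT.node hLX hRX hLXp hRXp
        have hadd : G.add X = node ((LG.map fun g => g.add X) ++ (LX.map fun h => G.add h))
            ((RG.map fun g => g.add X) ++ (RX.map fun h => G.add h)) := by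
          rw [hGdef, hXdef, add_node_left]
          simp [lopts, ropts]
        constructor
        · -- Left part
          rw [hadd, Lout_node, hXdef, Lout_node]
          refine lmax_le (by simpa using hLX) ?_
          intro a ha
          obtain ⟨xL, hxL, rfl⟩ := List.mem_map.1 ha
          have hsize : sizeOf xL < sizeOf X := by
            rw [hXdef]
            exact sizeOf_lt_of_mem_lopts (by simpa [lopts] using hxL)
          have hstep := (ih G xL (by omega) hGwt hP hR0 ⟨q, hLXp xL hxL⟩).2
          refine le_trans hstep (le_lmax ?_)
          exact List.mem_map.2 ⟨G.add xL, List.mem_append_right _ (List.mem_map.2 ⟨xL, hxL, rfl⟩), rfl⟩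
        · -- Right part
          rw [hadd, Rout_node, hXdef, Rout_node]
          refine le_lmin (by simp [hRX]) ?_
          intro a ha
          obtain ⟨y, hy, rfl⟩ := List.mem_map.1 ha
          rcases List.mem_append.1 hy with hy | hy
          · -- y = gR + X for gR ∈ RG
            obtain ⟨gR, hgR, rfl⟩ := List.mem_map.1 hy
            obtain ⟨Lg, Rg, rfl, hLg, hRg, hLgp, hRgp⟩ := isWT_true_node (hRGp gR hgR)
            -- 0 ≤ Lout gR
            have h1 : (0 : ℤ) ≤ Lout (node Lg Rg) := by
              refine le_trans ?_ (lmin_le (List.mem_map.2 ⟨node Lg Rg, hgR, rfl⟩))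
              rw [hGdef, Rout_node] at hR0
              exact le_trans hR0 (le_refl _)
            rw [Lout_node] at h1
            obtain ⟨a, ha', h0a⟩ := exists_le_of_le_lmax (by simpa using hLg) h1
            obtain ⟨gRL, hgRL, rfl⟩ := List.mem_map.1 ha'
            -- gRL is an even subgame of G with 0 ≤ Rout gRL
            have hsub : Subgame gRL G := by
              rw [hGdef]
              exact Subgame.right hgR (Subgame.left hgRL (Subgame.refl gRL))
            have hsz1 : sizeOf gRL < sizeOf (node Lg Rg) :=
              sizeOf_lt_of_mem_lopts (by simpa [lopts] using hgRL)
            have hsz2 : sizeOf (node Lg Rg) < sizeOf G := by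
              rw [hGdef]
              exact sizeOf_lt_of_mem_ropts (by simpa [ropts] using hgR)
            have hstep := (ih gRL X (by omega) (hLgp gRL hgRL)
              (fun H hs hw => hP H (hs.trans hsub) hw) h0a ⟨!q, hXwt'⟩).2
            rw [hXdef, Rout_node] at hstep
            refine le_trans hstep ?_
            -- Rout (gRL + X) ≤ Lout (gR + X)
            have haddg : (node Lg Rg).add X = node ((Lg.map fun g => g.add X) ++ (LX.map fun h => (node Lg Rg).add h))
                ((Rg.map fun g => g.add X) ++ (RX.map fun h => (node Lg Rg).add h)) := by
              rw [hXdef, add_node_left]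
              simp [lopts, ropts]
            rw [haddg, Lout_node]
            exact le_lmax (List.mem_map.2 ⟨gRL.add X, List.mem_append_left _
              (List.mem_map.2 ⟨gRL, hgRL, rfl⟩), rfl⟩)
          · -- y = G + xR for xR ∈ RX
            obtain ⟨xR, hxR, rfl⟩ := List.mem_map.1 hy
            have hsize : sizeOf xR < sizeOf X := by
              rw [hXdef]
              exact sizeOf_lt_of_mem_ropts (by simpa [ropts] using hxR)
            have hstep := (ih G xR (by omega) hGwt hP hR0 ⟨q, hRXp xR hxR⟩).1
            exact le_trans (lmin_le (List.mem_map.2 ⟨xR, hxR, rfl⟩)) hstep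


end WT

/-- for even-tempered G with gap₀(G) = 0, G ≳ 0 (i.e. L(G+X) ≥ L(X) and
R(G+X) ≥ R(X) for all well-tempered X) if and only if R(G) ≥ 0. -/
theorem ge_zero_iff (G : WT) (hG : WT.IsWT G false) (hgap : G.gap false = ((0 : ℤ) : WithBot ℤ)) :
    (∀ X : WT, X.Wt → X.Lout ≤ (G.add X).Lout ∧ X.Rout ≤ (G.add X).Rout) ↔ 0 ≤ G.Rout := by
  constructor
  · intro h
    have h2 := (h (WT.int 0) ⟨false, WT.IsWT.int 0⟩).2
    have h3 := (WT.out_add_int hG (0 : ℤ)).2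
    rw [WT.Rout_int] at h2
    omega
  · intro h X hX
    exact WT.ge_zero_main (sizeOf G + sizeOf X) G X le_rfl hG (WT.gap_prop hgap) h hX
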